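/- Suppose G* is a maximal r-regular induced subgraph of G with components of sizes m_1,…,m_m and constant per-component weights w'_1,…,w'_m, and every vertex i ∉ V* has at least r+1 neighbors j ∈ V* with w_i ≥ w_j. With multiplicative weighting Ã = WAW, the strategy x* with x*_i = w̃²/(w'_k)² for i ∈ V*_k (where 1/w̃² = Σ_k m_k/(w'_k)²) and 0 elsewhere is a Nash equilibrium with λ* = (r+1)w̃². -/

import Mathlib

open Matrix Finset

/-- Theorem 4.5: multiplicative weighting on a maximal r-regular subnetwork
whose components carry constant weights. The strategy x*_i = w̃²/(w'_k)² on
component k (with 1/w̃² = Σ_k m_k/(w'_k)²) is a Nash equilibrium with value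
λ* = (r+1)w̃². -/
theorem stmt_16 (n : ℕ) (A : Matrix (Fin n) (Fin n) ℝ)
    (hsym : A.IsSymm)
    (h01 : ∀ i j, A i j = 0 ∨ A i j = 1)
    (hdiag : ∀ i, A i i = 1)
    (w : Fin n → ℝ) (hw : ∀ i, 1 ≤ w i)
    (At : Matrix (Fin n) (Fin n) ℝ)
    (hAt : At = Matrix.diagonal w * A * Matrix.diagonal w)
    (r : ℕ) (m : ℕ) (comps : Fin m → Finset (Fin n))
    (hdisj : ∀ k l, k ≠ l → Disjoint (comps k) (comps l))
    (Vs : Finset (Fin n)) (hVs : Vs = Finset.univ.biUnion comps)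
    (hne : Vs.Nonempty)
    (hcompne : ∀ k, (comps k).Nonempty)
    (hreg : ∀ k, ∀ i ∈ comps k,
        ((comps k).filter (fun j => j ≠ i ∧ A i j = 1)).card = r)
    (hcross : ∀ k l, k ≠ l → ∀ i ∈ comps k, ∀ j ∈ comps l, A i j = 0)
    (w' : Fin m → ℝ) (hw' : ∀ k, 1 ≤ w' k)
    (hcompw : ∀ k, ∀ i ∈ comps k, w i = w' k)
    (hout : ∀ i, i ∉ Vs →
        r + 1 ≤ (Vs.filter (fun j => A i j = 1 ∧ w j ≤ w i)).card)
    (wbar : ℝ) (hwbar : wbar = (∑ k, ((comps k).card : ℝ) / (w' k) ^ 2)⁻¹)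
    (xstar : Fin n → ℝ)
    (hxstar : ∀ k, ∀ i ∈ comps k, xstar i = wbar / (w' k) ^ 2)
    (hxstar0 : ∀ i, i ∉ Vs → xstar i = 0) :
    xstar ∈ stdSimplex ℝ (Fin n) ∧
    (∀ x ∈ stdSimplex ℝ (Fin n),
        xstar ⬝ᵥ At.mulVec xstar ≤ x ⬝ᵥ At.mulVec xstar) ∧
    xstar ⬝ᵥ At.mulVec xstar = (r + 1 : ℝ) * wbar := by
  subst hAt hVs
  have hwpos : ∀ i, (0:ℝ) < w i := fun i => lt_of_lt_of_le one_pos (hw i)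
  have hw'pos : ∀ k, (0:ℝ) < w' k := fun k => lt_of_lt_of_le one_pos (hw' k)
  have hSpos : 0 < ∑ k, ((comps k).card : ℝ) / (w' k) ^ 2 := by
    obtain ⟨i0, hi0⟩ := hne
    rw [Finset.mem_biUnion] at hi0
    obtain ⟨k0, -, hk0⟩ := hi0
    refine Finset.sum_pos' (fun k _ => by positivity) ⟨k0, Finset.mem_univ _, ?_⟩
    have hc : 0 < (comps k0).card := Finset.card_pos.mpr ⟨i0, hk0⟩
    have := hw'pos k0
    positivity
  have hwbarpos : 0 < wbar := by rw [hwbar]; exact inv_pos.mpr hSpos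
  have hdisj' : ((Finset.univ : Finset (Fin m)) : Set (Fin m)).PairwiseDisjoint comps :=
    fun k _ l _ hkl => hdisj k l hkl
  have hx_nonneg : ∀ i, 0 ≤ xstar i := by
    intro i
    by_cases h : i ∈ Finset.univ.biUnion comps
    · obtain ⟨k, -, hk⟩ := Finset.mem_biUnion.mp h
      rw [hxstar k i hk]
      have := hw'pos k
      positivity
    · rw [hxstar0 i h]
  have hsumVs : ∀ f : Fin n → ℝ, (∀ j ∉ Finset.univ.biUnion comps, f j = 0) →
      ∑ j, f j = ∑ j ∈ Finset.univ.biUnion comps, f j := by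
    intro f hf
    exact (Finset.sum_subset (Finset.subset_univ _) (fun j _ hj => hf j hj)).symm
  have hsum1 : ∑ i, xstar i = 1 := by
    rw [hsumVs xstar hxstar0, Finset.sum_biUnion hdisj']
    have heach : ∀ k, ∑ i ∈ comps k, xstar i = ((comps k).card : ℝ) / (w' k) ^ 2 * wbar := by
      intro k
      rw [Finset.sum_congr rfl (fun i hi => hxstar k i hi), Finset.sum_const, nsmul_eq_mul]
      ring
    rw [Finset.sum_congr rfl (fun k _ => heach k), ← Finset.sum_mul, hwbar]
    field_simp
  -- pointwise value of the weighted matrix-vector product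
  have hmv : ∀ i, (Matrix.diagonal w * A * Matrix.diagonal w).mulVec xstar i
      = ∑ j ∈ Finset.univ.biUnion comps, w i * A i j * w j * xstar j := by
    intro i
    rw [Matrix.mulVec, dotProduct]
    rw [hsumVs _ (fun j hj => by rw [hxstar0 j hj, mul_zero])]
    refine Finset.sum_congr rfl (fun j _ => ?_)
    simp [Matrix.mul_diagonal, Matrix.diagonal_mul]
  have hin : ∀ k, ∀ i ∈ comps k,
      (Matrix.diagonal w * A * Matrix.diagonal w).mulVec xstar i = ((r:ℝ) + 1) * wbar := by
    intro k i hi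
    rw [hmv, Finset.sum_biUnion hdisj']
    rw [Finset.sum_eq_single_of_mem k (Finset.mem_univ k)
      (fun l _ hlk => Finset.sum_eq_zero (fun j hj => by
        rw [hcross k l (Ne.symm hlk) i hi j hj]; ring))]
    have hsumA : ∑ j ∈ comps k, A i j = (r:ℝ) + 1 := by
      rw [← Finset.sum_filter_add_sum_filter_not (comps k) (fun j => A i j = 1)]
      have h2 : ∑ j ∈ (comps k).filter (fun j => ¬ A i j = 1), A i j = 0 :=
        Finset.sum_eq_zero (fun j hj => by
          rcases h01 i j with h | h
          · exact h
          · exact absurd h (Finset.mem_filter.mp hj).2)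
      have h1 : ∑ j ∈ (comps k).filter (fun j => A i j = 1), A i j
          = ((comps k).filter (fun j => A i j = 1)).card := by
        rw [Finset.sum_congr rfl (fun j hj => (Finset.mem_filter.mp hj).2),
          Finset.sum_const, nsmul_eq_mul, mul_one]
      have hset : (comps k).filter (fun j => A i j = 1)
          = insert i ((comps k).filter (fun j => j ≠ i ∧ A i j = 1)) := by
        ext j
        simp only [Finset.mem_filter, Finset.mem_insert]
        constructor
        · rintro ⟨hjm, hja⟩
          by_cases hji : j = i
          · exact Or.inl hji
          · exact Or.inr ⟨hjm, hji, hja⟩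
        · rintro (h | ⟨hjm, -, hja⟩)
          · subst h; exact ⟨hi, hdiag _⟩
          · exact ⟨hjm, hja⟩
      rw [h1, h2, hset, Finset.card_insert_of_notMem (by simp), hreg k i hi]
      push_cast
      ring
    have hterm : ∀ j ∈ comps k, w i * A i j * w j * xstar j = A i j * wbar := by
      intro j hj
      rw [hcompw k i hi, hcompw k j hj, hxstar k j hj]
      have := (hw'pos k).ne'
      field_simp
    rw [Finset.sum_congr rfl hterm, ← Finset.sum_mul, hsumA]
  have hlow : ∀ i, ((r:ℝ) + 1) * wbar
      ≤ (Matrix.diagonal w * A * Matrix.diagonal w).mulVec xstar i := by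
    intro i
    by_cases h : i ∈ Finset.univ.biUnion comps
    · obtain ⟨k, -, hk⟩ := Finset.mem_biUnion.mp h
      rw [hin k i hk]
    · rw [hmv]
      have hnn : ∀ j ∈ Finset.univ.biUnion comps, 0 ≤ w i * A i j * w j * xstar j := by
        intro j _
        have h0 : 0 ≤ A i j := by rcases h01 i j with h | h <;> rw [h] <;> norm_num
        have := (hwpos i).le
        have := (hwpos j).le
        have := hx_nonneg j
        positivity
      have hsub : (Finset.univ.biUnion comps).filter (fun j => A i j = 1 ∧ w j ≤ w i)
          ⊆ Finset.univ.biUnion comps := Finset.filter_subset _ _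
      have hstep : ∑ j ∈ (Finset.univ.biUnion comps).filter (fun j => A i j = 1 ∧ w j ≤ w i),
            w i * A i j * w j * xstar j
          ≤ ∑ j ∈ Finset.univ.biUnion comps, w i * A i j * w j * xstar j :=
        Finset.sum_le_sum_of_subset_of_nonneg hsub (fun j hj _ => hnn j hj)
      refine le_trans ?_ hstep
      have hterm : ∀ j ∈ (Finset.univ.biUnion comps).filter (fun j => A i j = 1 ∧ w j ≤ w i),
          wbar ≤ w i * A i j * w j * xstar j := by
        intro j hj
        obtain ⟨hjm, hja, hjw⟩ := Finset.mem_filter.mp hj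
        obtain ⟨k, -, hk⟩ := Finset.mem_biUnion.mp hjm
        rw [hja, hxstar k j hk, ← hcompw k j hk]
        have hwj := hwpos j
        have : w i * 1 * w j * (wbar / w j ^ 2) = (w i / w j) * wbar := by
          field_simp
        rw [this]
        have h1 : 1 ≤ w i / w j := (one_le_div hwj).mpr hjw
        nlinarith
      calc ((r:ℝ) + 1) * wbar
          ≤ (((Finset.univ.biUnion comps).filter
              (fun j => A i j = 1 ∧ w j ≤ w i)).card : ℝ) * wbar := by
            refine mul_le_mul_of_nonneg_right ?_ hwbarpos.le
            have := hout i h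
            push_cast
            exact_mod_cast this
        _ ≤ ∑ j ∈ (Finset.univ.biUnion comps).filter (fun j => A i j = 1 ∧ w j ≤ w i),
              w i * A i j * w j * xstar j := by
            rw [← nsmul_eq_mul, ← Finset.sum_const]
            exact Finset.sum_le_sum hterm
  have hval : xstar ⬝ᵥ (Matrix.diagonal w * A * Matrix.diagonal w).mulVec xstar
      = ((r:ℝ) + 1) * wbar := by
    rw [dotProduct]
    rw [hsumVs _ (fun j hj => by rw [hxstar0 j hj, zero_mul])]
    have : ∀ j ∈ Finset.univ.biUnion comps,
        xstar j * (Matrix.diagonal w * A * Matrix.diagonal w).mulVec xstar j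
        = xstar j * (((r:ℝ) + 1) * wbar) := by
      intro j hj
      obtain ⟨k, -, hk⟩ := Finset.mem_biUnion.mp hj
      rw [hin k j hk]
    rw [Finset.sum_congr rfl this, ← Finset.sum_mul,
      ← hsumVs xstar hxstar0, hsum1, one_mul]
  refine ⟨⟨hx_nonneg, hsum1⟩, ?_, by exact_mod_cast hval⟩
  intro x hx
  obtain ⟨hx0, hx1⟩ := hx
  rw [dotProduct] at hval ⊢
  rw [hval]
  calc ((r:ℝ) + 1) * wbar = ∑ i, x i * (((r:ℝ) + 1) * wbar) := by
        rw [← Finset.sum_mul, hx1, one_mul]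
    _ ≤ ∑ i, x i * (Matrix.diagonal w * A * Matrix.diagonal w).mulVec xstar i :=
        Finset.sum_le_sum (fun i _ => mul_le_mul_of_nonneg_left (hlow i) (hx0 i))
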